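/- Open-loop SIS, healthy regime (Proposition 1, part 1): Assume A is irreducible and s(BA − Γ) ≤ 0. Then 0 is the unique point y ∈ [0,1]ⁿ with G(y) = 0, and 0 is globally asymptotically stable for the open-loop SIS system on [0,1]ⁿ: (i) for every ε > 0 there exists δ > 0 such that every solution with x(0) ∈ [0,1]ⁿ and ‖x(0)‖ < δ satisfies ‖x(t)‖ < ε for all t ≥ 0, and (ii) every solution with x(0) ∈ [0,1]ⁿ satisfies x(t) → 0 as t → ∞. -/

import Mathlib

open Matrix Filter Topology
open Set

/-- Spectral abscissa: the maximum of the real parts of the complex eigenvalues. -/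
noncomputable def specAbs {n : ℕ} (M : Matrix (Fin n) (Fin n) ℝ) : ℝ :=
  sSup (Complex.re '' spectrum ℂ (M.map (Complex.ofReal ·)))

/-- Irreducibility of a matrix. -/
def MatIrreducible {n : ℕ} (A : Matrix (Fin n) (Fin n) ℝ) : Prop :=
  ∀ S : Set (Fin n), S.Nonempty → S ≠ Set.univ → ∃ i ∈ S, ∃ j ∉ S, 0 < A i j

/-- The open-loop SIS vector field. -/
def sisG {n : ℕ} (A : Matrix (Fin n) (Fin n) ℝ) (β γ : Fin n → ℝ)
    (x : Fin n → ℝ) (i : Fin n) : ℝ :=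
  β i * (1 - x i) * (∑ j, A i j * x j) - γ i * x i

/-- A solution of the open-loop SIS system. -/
def IsSolG {n : ℕ} (A : Matrix (Fin n) (Fin n) ℝ) (β γ : Fin n → ℝ)
    (x : ℝ → Fin n → ℝ) : Prop :=
  ∀ t : ℝ, 0 ≤ t → HasDerivWithinAt x (sisG A β γ (x t)) (Set.Ici 0) t

section Dini

variable {ι : Type*} [Fintype ι] [Nonempty ι]

noncomputable def fmax (f : ι → ℝ → ℝ) (t : ℝ) : ℝ :=
  Finset.univ.sup' Finset.univ_nonempty (fun i => f i t)

lemma le_fmax (f : ι → ℝ → ℝ) (i : ι) (t : ℝ) : f i t ≤ fmax f t :=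
  Finset.le_sup' (fun i => f i t) (Finset.mem_univ i)

lemma fmax_exists (f : ι → ℝ → ℝ) (t : ℝ) : ∃ i, fmax f t = f i t := by
  obtain ⟨i, _, h⟩ := Finset.exists_mem_eq_sup' (Finset.univ_nonempty) (fun i => f i t)
  exact ⟨i, h⟩

lemma fmax_slope (f : ι → ℝ → ℝ) (d : ι → ℝ) (t : ℝ)
    (hf : ∀ i, HasDerivWithinAt (f i) (d i) (Ici t) t)
    (r : ℝ) (hr : ∀ i, f i t = fmax f t → d i < r) :
    ∀ᶠ z in 𝓝[>] t, slope (fmax f) t z < r := by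
  have H : ∀ i, ∀ᶠ z in 𝓝[>] t, f i z < fmax f t + r * (z - t) := by
    intro i
    rcases eq_or_lt_of_le (le_fmax f i t) with h | h
    · have hs : Tendsto (slope (f i) t) (𝓝[>] t) (𝓝 (d i)) :=
        (hasDerivWithinAt_iff_tendsto_slope' (lt_irrefl t)).1 (hf i).Ioi_of_Ici
      have h1 : ∀ᶠ z in 𝓝[>] t, slope (f i) t z < r := hs.eventually_lt_const (hr i h)
      filter_upwards [h1, self_mem_nhdsWithin] with z hz (hz2 : t < z)
      rw [slope_def_field, div_lt_iff₀ (by linarith)] at hz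
      rw [← h]; linarith
    · have hcont : Tendsto (f i) (𝓝[>] t) (𝓝 (f i t)) :=
        ((hf i).continuousWithinAt).mono_left (nhdsWithin_mono t Ioi_subset_Ici_self)
      have hrhs : Tendsto (fun z => fmax f t + r * (z - t)) (𝓝[>] t) (𝓝 (fmax f t)) := by
        have : Tendsto (fun z => fmax f t + r * (z - t)) (𝓝 t) (𝓝 (fmax f t + r * (t - t))) := by
          apply Continuous.tendsto
          continuity
        simpa using this.mono_left nhdsWithin_le_nhds
      exact hcont.eventually_lt hrhs h
  have := (eventually_all.2 H).and self_mem_nhdsWithin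
  filter_upwards [this] with z ⟨hz, (hz2 : t < z)⟩
  have hm : fmax f z < fmax f t + r * (z - t) := by
    obtain ⟨i, hi⟩ := fmax_exists f z
    rw [hi]; exact hz i
  rw [slope_def_field, div_lt_iff₀ (by linarith)]
  linarith

lemma fmax_bound {T : ℝ}
    (f : ι → ℝ → ℝ) (d : ι → ℝ → ℝ) (B B' : ℝ → ℝ)
    (hf : ∀ i, ∀ t ∈ Icc (0:ℝ) T, HasDerivWithinAt (f i) (d i t) (Ici t) t)
    (hfc : ∀ i, ContinuousOn (f i) (Icc 0 T))
    (hBc : ContinuousOn B (Icc 0 T))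
    (hB : ∀ t ∈ Ico (0:ℝ) T, HasDerivWithinAt B (B' t) (Ici t) t)
    (h0 : ∀ i, f i 0 ≤ B 0)
    (hb : ∀ t ∈ Ico (0:ℝ) T, (∀ j, f j t ≤ B t) → ∀ i, f i t = B t → d i t < B' t) :
    ∀ t ∈ Icc (0:ℝ) T, ∀ i, f i t ≤ B t := by
  classical
  set F := fmax f with hF
  have hne : ∀ t : ℝ, (Finset.univ.filter (fun i => f i t = F t)).Nonempty := by
    intro t
    obtain ⟨i, hi⟩ := fmax_exists f t
    exact ⟨i, Finset.mem_filter.2 ⟨Finset.mem_univ i, hi.symm⟩⟩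
  set D : ℝ → ℝ := fun t => (Finset.univ.filter (fun i => f i t = F t)).sup' (hne t) (fun i => d i t)
    with hD
  have main : ∀ t ∈ Icc (0:ℝ) T, F t ≤ B t := by
    apply image_le_of_liminf_slope_right_lt_deriv_boundary' (f' := D)
    · exact ContinuousOn.finset_sup'_apply Finset.univ_nonempty (fun i _ => hfc i)
    · intro x hx r hr
      have hIcc : x ∈ Icc (0:ℝ) T := ⟨hx.1, hx.2.le⟩
      apply Filter.Eventually.frequently
      apply fmax_slope f (fun i => d i x) x (fun i => hf i x hIcc)
      intro i hi
      calc d i x ≤ D x := Finset.le_sup' (fun i => d i x) (Finset.mem_filter.2 ⟨Finset.mem_univ i, hi⟩)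
        _ < r := hr
    · obtain ⟨i, hi⟩ := fmax_exists f 0
      show fmax f 0 ≤ B 0
      rw [hi]; exact h0 i
    · exact hBc
    · exact hB
    · intro x hx hFB
      apply (Finset.sup'_lt_iff (hne x)).2
      intro i hi
      simp only [Finset.mem_filter] at hi
      exact hb x hx (fun j => (le_fmax f j x).trans hFB.le) i (hi.2.trans hFB)
  intro t ht i
  exact (le_fmax f i t).trans (main t ht)

end Dini


section PF

variable {n : ℕ}

lemma pow_entry_nonneg {P : Matrix (Fin n) (Fin n) ℝ} (hP : ∀ i j, 0 ≤ P i j) :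
    ∀ (k : ℕ) (i j : Fin n), 0 ≤ (P ^ k) i j := by
  intro k
  induction k with
  | zero => intro i j; simp [Matrix.one_apply]; split <;> norm_num
  | succ m ih =>
    intro i j
    rw [pow_succ, Matrix.mul_apply]
    exact Finset.sum_nonneg fun l _ => mul_nonneg (ih i l) (hP l j)

lemma matpow_pos {P : Matrix (Fin n) (Fin n) ℝ} (hP : ∀ i j, 0 ≤ P i j)
    (hdiag : ∀ i, 0 < P i i)
    (hirr : ∀ S : Set (Fin n), S.Nonempty → S ≠ Set.univ → ∃ i ∈ S, ∃ j ∉ S, 0 < P i j) :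
    ∀ i j, 0 < (P ^ n) i j := by
  intro i j
  set T : ℕ → Set (Fin n) := fun k => {l | 0 < (P ^ k) i l} with hT
  have hml : ∀ k l, l ∈ T k → l ∈ T (k + 1) := by
    intro k l hl
    have hle : (P ^ k) i l * P l l ≤ (P ^ (k+1)) i l := by
      rw [pow_succ, Matrix.mul_apply]
      exact Finset.single_le_sum
        (fun m _ => mul_nonneg (pow_entry_nonneg hP k i m) (hP m l)) (Finset.mem_univ l)
    exact lt_of_lt_of_le (mul_pos hl (hdiag l)) hle
  have hbase : ∀ k, i ∈ T k := by
    intro k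
    induction k with
    | zero => show (0:ℝ) < (P ^ 0) i i; simp [Matrix.one_apply]
    | succ m ih => exact hml m i ih
  have hcard : ∀ k, T k = Set.univ ∨ k + 1 ≤ (T k).ncard := by
    intro k
    induction k with
    | zero =>
      right
      exact (Set.ncard_pos (Set.toFinite _)).2 ⟨i, hbase 0⟩
    | succ m ih =>
      by_cases h : T (m+1) = Set.univ
      · exact Or.inl h
      · right
        rcases ih with h0 | h0
        · exact absurd (Set.eq_univ_of_univ_subset (h0 ▸ fun l hl => hml m l (h0 ▸ Set.mem_univ l))) h
        · have hTm : T m ≠ Set.univ := by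
            intro he
            exact h (Set.eq_univ_of_univ_subset (fun l _ => hml m l (he ▸ Set.mem_univ l)))
          obtain ⟨a, ha, b, hb, hab⟩ := hirr (T m) ⟨i, hbase m⟩ hTm
          have hbmem : b ∈ T (m+1) := by
            have hle : (P ^ m) i a * P a b ≤ (P ^ (m+1)) i b := by
              rw [pow_succ, Matrix.mul_apply]
              exact Finset.single_le_sum
                (fun l _ => mul_nonneg (pow_entry_nonneg hP m i l) (hP l b)) (Finset.mem_univ a)
            exact lt_of_lt_of_le (mul_pos ha hab) hle
          have hsub : insert b (T m) ⊆ T (m+1) := by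
            intro l hl
            rcases hl with rfl | hl
            · exact hbmem
            · exact hml m l hl
          have h1 : (T m).ncard + 1 ≤ (T (m+1)).ncard := by
            rw [← Set.ncard_insert_of_notMem hb (Set.toFinite _)]
            exact Set.ncard_le_ncard hsub (Set.toFinite _)
          omega
  rcases hcard n with h | h
  · have : j ∈ T n := h ▸ Set.mem_univ j
    exact this
  · exfalso
    have : (T n).ncard ≤ n := by
      calc (T n).ncard ≤ (Set.univ : Set (Fin n)).ncard :=
            Set.ncard_le_ncard (Set.subset_univ _) (Set.toFinite _)
        _ = n := by rw [Set.ncard_univ, Nat.card_eq_fintype_card, Fintype.card_fin]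
    omega

lemma mulVec_entry_pos {Q : Matrix (Fin n) (Fin n) ℝ} (hQ : ∀ i j, 0 < Q i j)
    {u : Fin n → ℝ} (hu : ∀ i, 0 ≤ u i) (hne : ∃ l, 0 < u l) : ∀ i, 0 < (Q *ᵥ u) i := by
  intro i
  obtain ⟨l, hl⟩ := hne
  have : Q i l * u l ≤ (Q *ᵥ u) i := by
    rw [Matrix.mulVec, dotProduct]
    exact Finset.single_le_sum (fun m _ => mul_nonneg (hQ i m).le (hu m)) (Finset.mem_univ l)
  exact lt_of_lt_of_le (mul_pos (hQ i l) hl) this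

end PF

lemma exists_pos_eigen {P : Matrix (Fin n) (Fin n) ℝ} (hn : 1 ≤ n) (hP : ∀ i j, 0 ≤ P i j)
    (hQ : ∀ i j, 0 < (P ^ n) i j) :
    ∃ (w : Fin n → ℝ) (μ : ℝ), (∀ i, 0 < w i) ∧ 0 ≤ μ ∧ P *ᵥ w = μ • w := by
  classical
  haveI : Nonempty (Fin n) := ⟨⟨0, hn⟩⟩
  set Q := P ^ n with hQdef
  have hQc : Continuous fun u : Fin n → ℝ => Q *ᵥ u := by
    have h1 : ⇑(Q.mulVecLin) = fun u : Fin n → ℝ => Q *ᵥ u := funext fun u => Q.mulVecLin_apply u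
    rw [← h1]
    exact Q.mulVecLin.continuous_of_finiteDimensional
  have hPc : Continuous fun u : Fin n → ℝ => P *ᵥ u := by
    have h1 : ⇑(P.mulVecLin) = fun u : Fin n → ℝ => P *ᵥ u := funext fun u => P.mulVecLin_apply u
    rw [← h1]
    exact P.mulVecLin.continuous_of_finiteDimensional
  set Δ : Set (Fin n → ℝ) := {u | (∀ i, 0 ≤ u i) ∧ ∑ i, u i = 1} with hΔdef
  have hΔne : (fun _ => (n:ℝ)⁻¹) ∈ Δ := by
    constructor
    · intro i; positivity
    · simp [Finset.sum_const, Finset.card_univ]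
      rw [mul_inv_cancel₀]
      positivity
  have hΔeq : Δ = (⋂ i, {u : Fin n → ℝ | 0 ≤ u i}) ∩ {u : Fin n → ℝ | ∑ i, u i = 1} := by
    ext u; simp [hΔdef]
  have hΔclosed : IsClosed Δ := by
    rw [hΔeq]
    exact (isClosed_iInter fun i => isClosed_le continuous_const (continuous_apply i)).inter
      (isClosed_eq (by continuity) continuous_const)
  have hΔcpt : IsCompact Δ := by
    apply IsCompact.of_isClosed_subset (isCompact_closedBall (0 : Fin n → ℝ) 1) hΔclosed
    intro u hu
    rw [mem_closedBall_zero_iff]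
    refine (pi_norm_le_iff_of_nonneg (by norm_num)).2 fun i => ?_
    rw [Real.norm_eq_abs, abs_of_nonneg (hu.1 i)]
    calc u i ≤ ∑ j, u j := Finset.single_le_sum (fun j _ => hu.1 j) (Finset.mem_univ i)
      _ = 1 := hu.2
  set K : Set (Fin n → ℝ) := (fun u => Q *ᵥ u) '' Δ with hKdef
  have hKcpt : IsCompact K := hΔcpt.image hQc
  have hKpos : ∀ v ∈ K, ∀ i, 0 < v i := by
    rintro v ⟨u, hu, rfl⟩ i
    have hex : ∃ l, 0 < u l := by
      by_contra h
      push_neg at h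
      have hall : ∀ l ∈ Finset.univ, u l = 0 := fun l _ => le_antisymm (h l) (hu.1 l)
      have hsum : ∑ i, u i = 1 := hu.2
      rw [Finset.sum_congr rfl hall, Finset.sum_const_zero] at hsum
      exact one_ne_zero hsum.symm
    exact mulVec_entry_pos hQ hu.1 hex i
  have hKne : K.Nonempty := ⟨Q *ᵥ (fun _ => (n:ℝ)⁻¹), mem_image_of_mem _ hΔne⟩
  -- lower bound a
  have hmin : ∀ i : Fin n, ∃ g ∈ K, ∀ v ∈ K, g i ≤ v i := by
    intro i
    obtain ⟨g, hgK, hg⟩ := hKcpt.exists_isMinOn hKne (continuous_apply i).continuousOn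
    exact ⟨g, hgK, fun v hv => hg hv⟩
  choose g hgK hg using hmin
  set a : ℝ := Finset.univ.inf' Finset.univ_nonempty (fun i => g i i) with hadef
  have ha_pos : 0 < a := by
    rw [hadef]
    apply (Finset.lt_inf'_iff _).2
    intro i _
    exact hKpos (g i) (hgK i) i
  have haK : ∀ v ∈ K, ∀ i, a ≤ v i := by
    intro v hv i
    exact le_trans (Finset.inf'_le _ (Finset.mem_univ i)) (hg i v hv)
  -- upper bound b
  have hmax' : ∀ i : Fin n, ∃ g ∈ K, ∀ v ∈ K, v i ≤ g i := by
    intro i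
    obtain ⟨g, hgK, hgm⟩ := hKcpt.exists_isMaxOn hKne (continuous_apply i).continuousOn
    exact ⟨g, hgK, fun v hv => hgm hv⟩
  choose gb hgbK hgb using hmax'
  set b : ℝ := Finset.univ.sup' Finset.univ_nonempty (fun i => gb i i) with hbdef
  have hbK : ∀ v ∈ K, ∀ i, v i ≤ b := by
    intro v hv i
    exact le_trans (hgb i v hv) (Finset.le_sup' (fun i => gb i i) (Finset.mem_univ i))
  have hb_pos : 0 < b := by
    obtain ⟨v0, hv0⟩ := hKne
    exact lt_of_lt_of_le (hKpos v0 hv0 (Classical.arbitrary _)) (hbK v0 hv0 _)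
  -- entry bound
  set Pm : ℝ := Finset.univ.sup' Finset.univ_nonempty
      (fun i => Finset.univ.sup' Finset.univ_nonempty (fun j => P i j)) with hPmdef
  have hPm : ∀ i j, P i j ≤ Pm := fun i j =>
    le_trans (Finset.le_sup' (P i) (Finset.mem_univ j))
      (Finset.le_sup' (fun i => Finset.univ.sup' Finset.univ_nonempty (fun j => P i j))
        (Finset.mem_univ i))
  have hPm0 : 0 ≤ Pm := le_trans (hP (Classical.arbitrary _) (Classical.arbitrary _)) (hPm _ _)
  set R : ℝ := (n * Pm * b) / a + 1 with hRdef
  have hbound : ∀ v ∈ K, ∀ lam : ℝ, 0 ≤ lam → (∀ i, lam * v i ≤ (P *ᵥ v) i) → lam ≤ R - 1 := by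
    intro v hv lam hlam hineq
    have i0 : Fin n := Classical.arbitrary _
    have h1 : lam * a ≤ lam * v i0 := by
      apply mul_le_mul_of_nonneg_left (haK v hv i0) hlam
    have h2 : (P *ᵥ v) i0 ≤ n * Pm * b := by
      rw [Matrix.mulVec, dotProduct]
      calc ∑ j, P i0 j * v j ≤ ∑ _j : Fin n, Pm * b := by
            apply Finset.sum_le_sum
            intro j _
            have := hKpos v hv j
            calc P i0 j * v j ≤ Pm * v j := mul_le_mul_of_nonneg_right (hPm i0 j) this.le
              _ ≤ Pm * b := mul_le_mul_of_nonneg_left (hbK v hv j) hPm0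
        _ = n * (Pm * b) := by
            rw [Finset.sum_const, Finset.card_univ, Fintype.card_fin, nsmul_eq_mul]
        _ = n * Pm * b := by ring
    have h3 : lam * a ≤ n * Pm * b := le_trans h1 (le_trans (hineq i0) h2)
    have : lam ≤ (n * Pm * b) / a := (le_div_iff₀ ha_pos).2 h3
    simpa [hRdef] using this
  have hR1 : (0:ℝ) ≤ R - 1 := by
    obtain ⟨v0, hv0⟩ := hKne
    exact hbound v0 hv0 0 le_rfl (fun i => by
      rw [zero_mul, Matrix.mulVec, dotProduct]
      exact Finset.sum_nonneg fun j _ => mul_nonneg (hP i j) (hKpos v0 hv0 j).le)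
  -- the compact feasible set
  set S : Set ((Fin n → ℝ) × ℝ) :=
    {p | p.1 ∈ K ∧ p.2 ∈ Icc (0:ℝ) R ∧ ∀ i, p.2 * p.1 i ≤ (P *ᵥ p.1) i} with hSdef
  have hScpt : IsCompact S := by
    have h1 : S = (K ×ˢ Icc (0:ℝ) R) ∩ {p | ∀ i, p.2 * p.1 i ≤ (P *ᵥ p.1) i} := by
      ext p; simp [hSdef, Set.mem_prod, and_assoc]
    rw [h1]
    apply IsCompact.inter_right (hKcpt.prod isCompact_Icc)
    rw [show {p : (Fin n → ℝ) × ℝ | ∀ i, p.2 * p.1 i ≤ (P *ᵥ p.1) i}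
        = ⋂ i, {p : (Fin n → ℝ) × ℝ | p.2 * p.1 i ≤ (P *ᵥ p.1) i} from by ext p; simp]
    refine isClosed_iInter fun i => isClosed_le ?_ ?_
    · exact continuous_snd.mul ((continuous_apply i).comp continuous_fst)
    · exact (continuous_apply i).comp (hPc.comp continuous_fst)
  have hSne : S.Nonempty := by
    obtain ⟨v0, hv0⟩ := hKne
    refine ⟨(v0, 0), hv0, ⟨le_rfl, show (0:ℝ) ≤ R by linarith⟩, fun i => ?_⟩
    rw [zero_mul, Matrix.mulVec, dotProduct]
    exact Finset.sum_nonneg fun j _ => mul_nonneg (hP i j) (hKpos v0 hv0 j).le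
  obtain ⟨⟨w, μ⟩, hwS, hmax⟩ := hScpt.exists_isMaxOn hSne continuous_snd.continuousOn
  obtain ⟨hwK, hμIcc, hineq⟩ := hwS
  refine ⟨w, μ, fun i => hKpos w hwK i, hμIcc.1, ?_⟩
  by_contra hne2
  set z : Fin n → ℝ := P *ᵥ w - μ • w with hzdef
  have hz_nonneg : ∀ i, 0 ≤ z i := fun i => by
    simp only [hzdef, Pi.sub_apply, Pi.smul_apply, smul_eq_mul, sub_nonneg]
    exact hineq i
  have hz_ex : ∃ l, 0 < z l := by
    by_contra h
    push_neg at h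
    have : z = 0 := funext fun l => le_antisymm (h l) (hz_nonneg l)
    rw [hzdef, sub_eq_zero] at this
    exact hne2 this
  have hQz : ∀ i, 0 < (Q *ᵥ z) i := mulVec_entry_pos hQ hz_nonneg hz_ex
  set s0 : ℝ := ∑ i, w i with hs0def
  have hs0 : 0 < s0 := Finset.sum_pos (fun i _ => hKpos w hwK i) Finset.univ_nonempty
  set u' : Fin n → ℝ := s0⁻¹ • w with hu'def
  have hu'Δ : u' ∈ Δ := by
    constructor
    · intro i
      exact mul_nonneg (by positivity) (hKpos w hwK i).le
    · rw [hu'def]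
      simp only [Pi.smul_apply, smul_eq_mul, ← Finset.mul_sum]
      rw [← hs0def, inv_mul_cancel₀ hs0.ne']
  set v' : Fin n → ℝ := Q *ᵥ u' with hv'def
  have hv'K : v' ∈ K := mem_image_of_mem _ hu'Δ
  have hv'pos : ∀ i, 0 < v' i := hKpos v' hv'K
  -- key identity
  have key : P *ᵥ v' - μ • v' = s0⁻¹ • (Q *ᵥ z) := by
    have hcomm : P * Q = Q * P := ((Commute.refl P).pow_right n)
    have e1 : P *ᵥ v' = Q *ᵥ (s0⁻¹ • (P *ᵥ w)) := by
      rw [hv'def, mulVec_mulVec, hcomm, ← mulVec_mulVec, hu'def, mulVec_smul, mulVec_smul]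
    have e2 : μ • v' = Q *ᵥ (s0⁻¹ • (μ • w)) := by
      rw [hv'def, hu'def, mulVec_smul, mulVec_smul, mulVec_smul, smul_comm]
    rw [e1, e2, ← Matrix.mulVec_sub, ← smul_sub, ← hzdef, mulVec_smul]
  have hkeypos : ∀ i, 0 < (P *ᵥ v') i - μ * v' i := by
    intro i
    have := congrFun key i
    simp only [Pi.sub_apply, Pi.smul_apply, smul_eq_mul] at this
    rw [this]
    exact mul_pos (by positivity) (hQz i)
  set δ : ℝ := Finset.univ.inf' Finset.univ_nonempty
      (fun i => ((P *ᵥ v') i - μ * v' i) / v' i) with hδdef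
  have hδpos : 0 < δ := by
    rw [hδdef]
    apply (Finset.lt_inf'_iff _).2
    intro i _
    exact div_pos (hkeypos i) (hv'pos i)
  have hineq' : ∀ i, (μ + δ) * v' i ≤ (P *ᵥ v') i := by
    intro i
    have h1 : δ ≤ ((P *ᵥ v') i - μ * v' i) / v' i := Finset.inf'_le _ (Finset.mem_univ i)
    rw [le_div_iff₀ (hv'pos i)] at h1
    nlinarith [hv'pos i]
  have hμδR : μ + δ ≤ R - 1 := hbound v' hv'K (μ + δ) (by linarith [hμIcc.1, hδpos.le]) hineq'
  have hmem : (v', μ + δ) ∈ S :=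
    ⟨hv'K, ⟨show (0:ℝ) ≤ μ + δ by linarith [hμIcc.1, hδpos.le],
      show μ + δ ≤ R by linarith⟩, hineq'⟩
  have hfin : μ + δ ≤ μ := hmax hmem
  linarith



section Bridge

lemma exists_good_w {n : ℕ} (hn : 2 ≤ n) (A : Matrix (Fin n) (Fin n) ℝ)
    (hA : ∀ i j, 0 ≤ A i j) (hirr : MatIrreducible A)
    (β γ : Fin n → ℝ) (hβ : ∀ i, 0 < β i) (hγ : ∀ i, 0 ≤ γ i)
    (hs : specAbs (Matrix.diagonal β * A - Matrix.diagonal γ) ≤ 0) :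
    ∃ w : Fin n → ℝ, (∀ i, 0 < w i) ∧ (∀ i, β i * (∑ j, A i j * w j) ≤ γ i * w i) ∧
      (∀ i, 0 < γ i) := by
  classical
  haveI : Nonempty (Fin n) := ⟨⟨0, by omega⟩⟩
  haveI : Nontrivial (Fin n) := Fin.nontrivial_iff_two_le.2 hn
  set M : Matrix (Fin n) (Fin n) ℝ := Matrix.diagonal β * A - Matrix.diagonal γ with hMdef
  have hMapply : ∀ i j, M i j = β i * A i j - (if i = j then γ i else 0) := by
    intro i j
    rw [hMdef]
    simp [Matrix.sub_apply, Matrix.diagonal_mul, Matrix.diagonal_apply]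
  set c : ℝ := 1 + ∑ i, γ i with hcdef
  have hcγ : ∀ i, γ i + 1 ≤ c := by
    intro i
    have : γ i ≤ ∑ j, γ j := Finset.single_le_sum (fun j _ => hγ j) (Finset.mem_univ i)
    rw [hcdef]; linarith
  set P : Matrix (Fin n) (Fin n) ℝ := M + c • (1 : Matrix (Fin n) (Fin n) ℝ) with hPdef
  have hPapply : ∀ i j, P i j = β i * A i j - (if i = j then γ i else 0)
      + (if i = j then c else 0) := by
    intro i j
    rw [hPdef]
    simp only [Matrix.add_apply, Matrix.smul_apply, Matrix.one_apply, hMapply, smul_eq_mul]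
    split <;> simp
  have hPnn : ∀ i j, 0 ≤ P i j := by
    intro i j
    rw [hPapply]
    have h1 := mul_nonneg (hβ i).le (hA i j)
    rcases eq_or_ne i j with rfl | hne
    · rw [if_pos rfl, if_pos rfl]
      have := hcγ i; linarith
    · rw [if_neg hne, if_neg hne]; linarith
  have hPdiag : ∀ i, 0 < P i i := by
    intro i
    rw [hPapply, if_pos rfl, if_pos rfl]
    have h1 := mul_nonneg (hβ i).le (hA i i)
    have := hcγ i
    linarith
  have hPirr : ∀ S : Set (Fin n), S.Nonempty → S ≠ Set.univ → ∃ i ∈ S, ∃ j ∉ S, 0 < P i j := by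
    intro S hS1 hS2
    obtain ⟨i, hi, j, hj, hij⟩ := hirr S hS1 hS2
    refine ⟨i, hi, j, hj, ?_⟩
    have hne : i ≠ j := fun h => hj (h ▸ hi)
    rw [hPapply, if_neg hne, if_neg hne]
    have := mul_pos (hβ i) hij
    linarith
  have hQ := matpow_pos hPnn hPdiag hPirr
  obtain ⟨w, μ, hwpos, hμ0, hPw⟩ := exists_pos_eigen (by omega) hPnn hQ
  have hMw : M *ᵥ w = (μ - c) • w := by
    have h1 : P *ᵥ w = M *ᵥ w + c • w := by
      rw [hPdef, Matrix.add_mulVec, Matrix.smul_mulVec, Matrix.one_mulVec]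
    rw [sub_smul]
    rw [h1] at hPw
    rw [← hPw]; abel
  -- spectrum bound
  have hspec : μ - c ≤ 0 := by
    set M' : Matrix (Fin n) (Fin n) ℂ := M.map (Complex.ofReal ·) with hM'def
    set w' : Fin n → ℂ := fun i => (w i : ℂ) with hw'def
    have hMw' : M' *ᵥ w' = ((μ - c : ℝ) : ℂ) • w' := by
      funext i
      have hreal : (M *ᵥ w) i = (μ - c) * w i := by
        rw [hMw]; simp
      simp only [hM'def, hw'def, Matrix.mulVec, dotProduct, Matrix.map_apply,
        Pi.smul_apply, smul_eq_mul]
      rw [← Complex.ofReal_mul, ← hreal]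
      simp only [Matrix.mulVec, dotProduct]
      push_cast
      rfl
    have hw'ne : w' ≠ 0 := by
      intro h
      have := congrFun h (Classical.arbitrary (Fin n))
      simp only [hw'def, Pi.zero_apply, Complex.ofReal_eq_zero] at this
      exact (hwpos _).ne' this
    have hEig : Module.End.HasEigenvalue (Matrix.toLin' M') ((μ - c : ℝ) : ℂ) := by
      apply Module.End.hasEigenvalue_of_hasEigenvector
      refine ⟨Module.End.mem_eigenspace_iff.2 ?_, hw'ne⟩
      rw [Matrix.toLin'_apply, hMw']
    have hmem : ((μ - c : ℝ) : ℂ) ∈ spectrum ℂ M' := by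
      rw [← AlgEquiv.spectrum_eq (Matrix.toLinAlgEquiv (Pi.basisFun ℂ (Fin n))) M']
      rw [← Module.End.hasEigenvalue_iff_mem_spectrum]
      rw [show Matrix.toLinAlgEquiv (Pi.basisFun ℂ (Fin n)) M' = Matrix.toLin' M' by
        rw [← Matrix.toLin_eq_toLin']; rfl]
      convert hEig using 2
    have hmem2 : (μ - c) ∈ Complex.re '' spectrum ℂ M' :=
      ⟨((μ - c : ℝ) : ℂ), hmem, by simp⟩
    have hbdd : BddAbove (Complex.re '' spectrum ℂ M') :=
      ((Matrix.finite_spectrum M').image Complex.re).bddAbove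
    have : μ - c ≤ specAbs M := le_csSup hbdd hmem2
    exact le_trans this hs
  -- extract inequality
  have hMwi : ∀ i, (M *ᵥ w) i = β i * (∑ j, A i j * w j) - γ i * w i := by
    intro i
    simp only [Matrix.mulVec, dotProduct]
    have e1 : ∑ j, M i j * w j
        = ∑ j, (β i * A i j) * w j - ∑ j, (if i = j then γ i else 0) * w j := by
      rw [← Finset.sum_sub_distrib]
      exact Finset.sum_congr rfl fun j _ => by rw [hMapply]; ring
    have e2 : ∑ j, (β i * A i j) * w j = β i * ∑ j, A i j * w j := by
      rw [Finset.mul_sum]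
      exact Finset.sum_congr rfl fun j _ => by ring
    have e3 : ∑ j, (if i = j then γ i else 0) * w j = γ i * w i := by
      have hcongr : ∀ j ∈ Finset.univ, (if i = j then γ i else 0) * w j
          = if i = j then γ i * w j else 0 := fun j _ => by split <;> simp
      rw [Finset.sum_congr rfl hcongr, Finset.sum_ite_eq]
      simp
    rw [e1, e2, e3]
  have hkey : ∀ i, β i * (∑ j, A i j * w j) ≤ γ i * w i := by
    intro i
    have h1 : (M *ᵥ w) i = (μ - c) * w i := by rw [hMw]; simp
    have h2 : (μ - c) * w i ≤ 0 := mul_nonpos_of_nonpos_of_nonneg hspec (hwpos i).le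
    have h3 := hMwi i
    linarith [h1, h2]
  have hAw : ∀ i, 0 < ∑ j, A i j * w j := by
    intro i
    obtain ⟨j0, hj0⟩ := exists_ne i
    have hSne : ({i} : Set (Fin n)).Nonempty := ⟨i, rfl⟩
    have hSuniv : ({i} : Set (Fin n)) ≠ Set.univ := by
      intro h
      have : j0 ∈ ({i} : Set (Fin n)) := h ▸ Set.mem_univ j0
      exact hj0 this
    obtain ⟨i', hi', j, hj, hij⟩ := hirr {i} hSne hSuniv
    have : i' = i := hi'
    subst this
    have : A i' j * w j ≤ ∑ l, A i' l * w l :=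
      Finset.single_le_sum (fun l _ => mul_nonneg (hA i' l) (hwpos l).le) (Finset.mem_univ j)
    exact lt_of_lt_of_le (mul_pos hij (hwpos j)) this
  have hγpos : ∀ i, 0 < γ i := by
    intro i
    have h1 : 0 < β i * (∑ j, A i j * w j) := mul_pos (hβ i) (hAw i)
    have h2 : 0 < γ i * w i := lt_of_lt_of_le h1 (hkey i)
    by_contra h
    push_neg at h
    nlinarith [hwpos i]
  exact ⟨w, hwpos, hkey, hγpos⟩

end Bridge

section ODE

variable {n : ℕ}

lemma coord_deriv {A : Matrix (Fin n) (Fin n) ℝ} {β γ : Fin n → ℝ} {x : ℝ → Fin n → ℝ}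
    (hsol : IsSolG A β γ x) {t : ℝ} (ht : 0 ≤ t) (i : Fin n) :
    HasDerivWithinAt (fun s => x s i) (sisG A β γ (x t) i) (Ici 0) t :=
  hasDerivWithinAt_pi.1 (hsol t ht) i

lemma sol_contOn {A : Matrix (Fin n) (Fin n) ℝ} {β γ : Fin n → ℝ} {x : ℝ → Fin n → ℝ}
    (hsol : IsSolG A β γ x) {T : ℝ} : ContinuousOn x (Icc 0 T) := by
  intro t ht
  exact ((hsol t ht.1).continuousWithinAt).mono (fun s hs => hs.1)

lemma small_eps (v E : ℝ) (hE : 0 < E) (hv : ∀ ε : ℝ, 0 < ε → v ≤ ε * E) : v ≤ 0 := by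
  by_contra hvpos
  push_neg at hvpos
  have h1 := hv (v / (2 * E)) (by positivity)
  have h2 : v / (2 * E) * E = v / 2 := by field_simp
  rw [h2] at h1
  linarith

lemma sis_invariant (A : Matrix (Fin n) (Fin n) ℝ) (β γ : Fin n → ℝ)
    (hA : ∀ i j, 0 ≤ A i j) (hβ : ∀ i, 0 < β i) (hγ : ∀ i, 0 ≤ γ i)
    (x : ℝ → Fin n → ℝ) (hsol : IsSolG A β γ x)
    (hx0 : ∀ i, x 0 i ∈ Set.Icc (0:ℝ) 1) :
    ∀ t, 0 ≤ t → ∀ i, x t i ∈ Set.Icc (0:ℝ) 1 := by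
  intro T hT
  -- uniform bound on [0, T]
  obtain ⟨C0, hC0⟩ := (isCompact_Icc : IsCompact (Icc (0:ℝ) T)).exists_bound_of_continuousOn
    (sol_contOn hsol)
  set C : ℝ := max C0 0 with hCdef
  have hC0' : 0 ≤ C := le_max_right _ _
  have hxb : ∀ t ∈ Icc (0:ℝ) T, ∀ j, |x t j| ≤ C := by
    intro t ht j
    calc |x t j| = ‖x t j‖ := (Real.norm_eq_abs _).symm
      _ ≤ ‖x t‖ := norm_le_pi_norm (x t) j
      _ ≤ C0 := hC0 t ht
      _ ≤ C := le_max_left _ _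
  set SA : Fin n → ℝ := fun i => ∑ j, A i j with hSAdef
  have hSA0 : ∀ i, 0 ≤ SA i := fun i => Finset.sum_nonneg fun j _ => hA i j
  set K : ℝ := 1 + ∑ i, β i * (2 + C) * SA i with hKdef
  have hterm0 : ∀ i, 0 ≤ β i * (2 + C) * SA i :=
    fun i => mul_nonneg (mul_nonneg (hβ i).le (by linarith)) (hSA0 i)
  have hK1 : 1 ≤ K := by
    rw [hKdef]
    have : 0 ≤ ∑ i, β i * (2 + C) * SA i := Finset.sum_nonneg fun i _ => hterm0 i
    linarith
  have hKi : ∀ i, β i * (2 + C) * SA i ≤ K - 1 := by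
    intro i
    have := Finset.single_le_sum (fun j (_ : j ∈ Finset.univ) => hterm0 j) (Finset.mem_univ i)
    rw [hKdef]; linarith
  -- branch functions
  set f : Option (Fin n × Bool) → ℝ → ℝ := fun o t =>
    match o with
    | none => 0
    | some (i, true) => x t i - 1
    | some (i, false) => - x t i
    with hfdef
  set dd : Option (Fin n × Bool) → ℝ → ℝ := fun o t =>
    match o with
    | none => 0
    | some (i, true) => sisG A β γ (x t) i
    | some (i, false) => -(sisG A β γ (x t) i)
    with hdddef
  have key : ∀ ε : ℝ, 0 < ε → ∀ o, f o T ≤ ε * Real.exp (2 * K * T) := by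
    intro ε hε o
    have hexp : ∀ t, HasDerivAt (fun s => ε * Real.exp (2 * K * s)) (ε * (Real.exp (2 * K * t) * (2 * K))) t := by
      intro t
      have h1 : HasDerivAt (fun s : ℝ => 2 * K * s) (2 * K) t := by
        simpa using (hasDerivAt_id t).const_mul (2 * K)
      exact (h1.exp).const_mul ε
    have := fmax_bound (T := T) f dd
      (fun t => ε * Real.exp (2 * K * t)) (fun t => ε * (Real.exp (2 * K * t) * (2 * K)))
      ?_ ?_ ?_ ?_ ?_ ?_
    · exact (this T ⟨hT, le_rfl⟩ o)
    · -- derivatives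
      rintro (_ | ⟨i, b⟩) t ht
      · exact hasDerivWithinAt_const t _ 0
      · rcases b with _ | _
        · exact (((coord_deriv hsol ht.1 i).neg).mono (fun s hs => le_trans ht.1 hs))
        · exact (((coord_deriv hsol ht.1 i).sub_const 1).mono (fun s hs => le_trans ht.1 hs))
    · -- continuity
      rintro (_ | ⟨i, b⟩)
      · exact continuousOn_const
      · rcases b with _ | _
        · exact (((continuous_apply i).comp_continuousOn (sol_contOn hsol)).neg)
        · exact (((continuous_apply i).comp_continuousOn (sol_contOn hsol)).sub continuousOn_const)
    · exact fun t _ => ((hexp t).continuousAt).continuousWithinAt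
    · exact fun t _ => (hexp t).hasDerivWithinAt
    · -- initial condition
      rintro (_ | ⟨i, b⟩)
      · positivity
      · have h1 := (hx0 i).1
        have h2 := (hx0 i).2
        have h3 : (0:ℝ) < ε * Real.exp (2 * K * 0) := by positivity
        rcases b with _ | _
        · show -x 0 i ≤ ε * Real.exp (2 * K * 0); linarith
        · show x 0 i - 1 ≤ ε * Real.exp (2 * K * 0); linarith
    · -- contact bound
      rintro t ht hall o hact
      show dd o t < ε * (Real.exp (2 * K * t) * (2 * K))
      set ρ : ℝ := ε * Real.exp (2 * K * t) with hρdef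
      have hρpos : 0 < ρ := by positivity
      rw [show ε * (Real.exp (2 * K * t) * (2 * K)) = 2 * K * ρ from by rw [hρdef]; ring]
      have hx_ge : ∀ j, -ρ ≤ x t j := by
        intro j
        have h : - x t j ≤ ρ := hall (some (j, false))
        linarith
      have hS_ge : ∀ i, -(ρ * SA i) ≤ ∑ j, A i j * x t j := by
        intro i
        have h1 : ∀ j ∈ Finset.univ, A i j * (-ρ) ≤ A i j * x t j :=
          fun j _ => mul_le_mul_of_nonneg_left (hx_ge j) (hA i j)
        have h2 := Finset.sum_le_sum h1
        have h3 : ∑ j, A i j * (-ρ) = -(ρ * SA i) := by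
          rw [← Finset.sum_mul, hSAdef]; ring
        linarith [h3 ▸ h2]
      have hKρ : (K - 1) * ρ < 2 * K * ρ := by nlinarith
      match o with
      | none => show (0:ℝ) < 2 * K * ρ; positivity
      | some (i, false) =>
        have hxi : x t i = -ρ := by
          have : - x t i = ρ := hact
          linarith
        have hρC : ρ ≤ C := by
          have := hxb t ⟨ht.1, ht.2.le⟩ i
          rw [hxi] at this
          rw [abs_neg, abs_of_nonneg hρpos.le] at this
          exact this
        show -(sisG A β γ (x t) i) < 2 * K * ρ
        rw [sisG, hxi]
        set S := ∑ j, A i j * x t j with hSdef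
        have h5 : β i * (1 - -ρ) * (-(ρ * SA i)) ≤ β i * (1 - -ρ) * S :=
          mul_le_mul_of_nonneg_left (hS_ge i) (by nlinarith [hβ i, hρpos])
        have h6 : β i * (1 + ρ) * (ρ * SA i) ≤ β i * (2 + C) * SA i * ρ := by
          nlinarith [mul_nonneg (mul_nonneg (hβ i).le hρpos.le) (hSA0 i)]
        have h7 : β i * (2 + C) * SA i * ρ ≤ (K - 1) * ρ :=
          mul_le_mul_of_nonneg_right (hKi i) hρpos.le
        have h8 : 0 ≤ γ i * ρ := mul_nonneg (hγ i) hρpos.le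
        nlinarith
      | some (i, true) =>
        have hxi : x t i = 1 + ρ := by
          have : x t i - 1 = ρ := hact
          linarith
        have hρC : ρ ≤ C + 1 := by
          have := hxb t ⟨ht.1, ht.2.le⟩ i
          rw [hxi] at this
          have := (abs_le.1 this).2
          linarith
        show sisG A β γ (x t) i < 2 * K * ρ
        rw [sisG, hxi]
        set S := ∑ j, A i j * x t j with hSdef
        have h5 : β i * ρ * (-(ρ * SA i)) ≤ β i * ρ * S :=
          mul_le_mul_of_nonneg_left (hS_ge i) (mul_nonneg (hβ i).le hρpos.le)
        have h6 : β i * ρ * (ρ * SA i) ≤ β i * (2 + C) * SA i * ρ := by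
          nlinarith [mul_nonneg (mul_nonneg (hβ i).le hρpos.le) (hSA0 i)]
        have h7 : β i * (2 + C) * SA i * ρ ≤ (K - 1) * ρ :=
          mul_le_mul_of_nonneg_right (hKi i) hρpos.le
        have h8 : 0 ≤ γ i * (1 + ρ) := mul_nonneg (hγ i) (by linarith)
        nlinarith
  -- take ε → 0
  intro i
  have hE : (0:ℝ) < Real.exp (2 * K * T) := Real.exp_pos _
  constructor
  · have := small_eps (- x T i) _ hE (fun ε hε => key ε hε (some (i, false)))
    linarith
  · have := small_eps (x T i - 1) _ hE (fun ε hε => key ε hε (some (i, true)))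
    linarith

end ODE

section Decay

lemma sis_decay {n : ℕ} (A : Matrix (Fin n) (Fin n) ℝ) (β γ : Fin n → ℝ)
    (hA : ∀ i j, 0 ≤ A i j) (hβ : ∀ i, 0 < β i)
    (w : Fin n → ℝ) (hw : ∀ i, 0 < w i)
    (hkey : ∀ i, β i * (∑ j, A i j * w j) ≤ γ i * w i)
    (c : ℝ) (hc : 0 < c) (hcw : ∀ i, c < γ i * w i)
    (x : ℝ → Fin n → ℝ) (hsol : IsSolG A β γ x)
    (hbox : ∀ t, 0 ≤ t → ∀ i, x t i ∈ Set.Icc (0:ℝ) 1)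
    (q0 : ℝ) (hq0 : 0 ≤ q0) (h0 : ∀ i, x 0 i ≤ q0 * w i)
    (ε : ℝ) (hε : 0 < ε) :
    ∀ t, 0 ≤ t → ∀ i, x t i ≤ ((q0 + ε) / (1 + c * (q0 + ε) * t)) * w i := by
  rcases Nat.eq_zero_or_pos n with rfl | hn1
  · intro t ht i; exact i.elim0
  haveI : Nonempty (Fin n) := ⟨⟨0, hn1⟩⟩
  intro T hT
  set b0 : ℝ := q0 + ε with hb0def
  have hb0 : 0 < b0 := by rw [hb0def]; linarith
  have hden : ∀ t : ℝ, 0 ≤ t → 0 < 1 + c * b0 * t := by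
    intro t ht
    have : 0 ≤ c * b0 * t := by positivity
    linarith
  set B : ℝ → ℝ := fun t => b0 / (1 + c * b0 * t) with hBdef
  set B' : ℝ → ℝ := fun t => (0 * (1 + c * b0 * t) - b0 * (c * b0)) / (1 + c * b0 * t) ^ 2
    with hB'def
  have hBB : ∀ t, 0 ≤ t → HasDerivAt B (B' t) t := by
    intro t ht
    have hdenD : HasDerivAt (fun s : ℝ => 1 + c * b0 * s) (c * b0) t := by
      simpa using ((hasDerivAt_id t).const_mul (c * b0)).const_add 1
    exact (hasDerivAt_const t b0).div hdenD (hden t ht).ne'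
  have main := fmax_bound (T := T) (fun i t => x t i / w i)
    (fun i t => sisG A β γ (x t) i / w i) B B' ?_ ?_ ?_ ?_ ?_ ?_
  · intro i
    have h := main T ⟨hT, le_rfl⟩ i
    rw [hBdef] at h
    have := (div_le_iff₀ (hw i)).1 h
    calc x T i ≤ b0 / (1 + c * b0 * T) * w i := by
          rw [div_le_iff₀ (hw i)] at h
          nlinarith [hw i]
      _ = (q0 + ε) / (1 + c * (q0 + ε) * T) * w i := by rw [hb0def]
  · intro i t ht
    exact ((coord_deriv hsol ht.1 i).div_const (w i)).mono (fun s hs => le_trans ht.1 hs)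
  · intro i
    exact ((continuous_apply i).comp_continuousOn (sol_contOn hsol)).div_const (w i)
  · exact fun t ht => ((hBB t ht.1).continuousAt).continuousWithinAt
  · exact fun t ht => (hBB t ht.1).hasDerivWithinAt
  · intro i
    show x 0 i / w i ≤ B 0
    have h1 : x 0 i / w i ≤ q0 := (div_le_iff₀ (hw i)).2 (h0 i)
    have h2 : B 0 = b0 := by rw [hBdef]; simp
    rw [h2, hb0def]; linarith
  · intro t ht hall i hact
    show sisG A β γ (x t) i / w i < B' t
    set ρ : ℝ := B t with hρdef
    have hdent : 0 < 1 + c * b0 * t := hden t ht.1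
    have hρpos : 0 < ρ := by
      rw [hρdef, hBdef]
      exact div_pos hb0 hdent
    have hB'eq : B' t = -(c * ρ ^ 2) := by
      rw [hB'def, hρdef, hBdef]
      field_simp
      ring
    rw [hB'eq]
    have hxi : x t i = ρ * w i := by
      have h := hact
      rw [div_eq_iff (hw i).ne'] at h
      exact h
    have hxj : ∀ j, x t j ≤ ρ * w j := by
      intro j
      have h := hall j
      rw [div_le_iff₀ (hw j)] at h
      exact h
    have hb1 := hbox t ht.1
    set S : ℝ := ∑ j, A i j * x t j with hSdef
    have hS0 : 0 ≤ S := Finset.sum_nonneg fun j _ => mul_nonneg (hA i j) (hb1 j).1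
    have hSle : S ≤ ρ * (∑ j, A i j * w j) := by
      rw [hSdef, Finset.mul_sum]
      apply Finset.sum_le_sum
      intro j _
      calc A i j * x t j ≤ A i j * (ρ * w j) := mul_le_mul_of_nonneg_left (hxj j) (hA i j)
        _ = ρ * (A i j * w j) := by ring
    have h1 : β i * S ≤ ρ * (γ i * w i) := by
      have ha : β i * S ≤ β i * (ρ * (∑ j, A i j * w j)) :=
        mul_le_mul_of_nonneg_left hSle (hβ i).le
      have hb : ρ * (β i * (∑ j, A i j * w j)) ≤ ρ * (γ i * w i) :=
        mul_le_mul_of_nonneg_left (hkey i) hρpos.le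
      nlinarith
    have h2 : (0:ℝ) ≤ 1 - x t i := by linarith [(hb1 i).2]
    have h3 : β i * (1 - x t i) * S ≤ (1 - x t i) * (ρ * (γ i * w i)) := by
      have := mul_le_mul_of_nonneg_left h1 h2
      nlinarith
    have hsis : sisG A β γ (x t) i ≤ -(γ i * w i * w i * ρ ^ 2) := by
      rw [sisG, ← hSdef, hxi]
      nlinarith [mul_pos (hρpos) (hw i), (hb1 i).1, hxi]
    rw [div_lt_iff₀ (hw i)]
    have hρ2 : 0 < ρ ^ 2 := by positivity
    nlinarith [hcw i, hw i, mul_pos hρ2 (hw i)]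

end Decay


theorem stmt5 {n : ℕ} (hn : 2 ≤ n) (A : Matrix (Fin n) (Fin n) ℝ)
    (hA : ∀ i j, 0 ≤ A i j) (hirr : MatIrreducible A)
    (β γ : Fin n → ℝ) (hβ : ∀ i, 0 < β i) (hγ : ∀ i, 0 ≤ γ i)
    (hs : specAbs (Matrix.diagonal β * A - Matrix.diagonal γ) ≤ 0) :
    (sisG A β γ 0 = 0) ∧
    (∀ y : Fin n → ℝ, (∀ i, y i ∈ Set.Icc 0 1) → sisG A β γ y = 0 → y = 0) ∧
    (∀ ε > 0, ∃ δ > 0, ∀ x : ℝ → Fin n → ℝ, IsSolG A β γ x →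
      (∀ i, x 0 i ∈ Set.Icc (0:ℝ) 1) → ‖x 0‖ < δ →
      ∀ t : ℝ, 0 ≤ t → ‖x t‖ < ε) ∧
    (∀ x : ℝ → Fin n → ℝ, IsSolG A β γ x →
      (∀ i, x 0 i ∈ Set.Icc (0:ℝ) 1) →
      Tendsto x atTop (𝓝 0)) := by
  haveI : Nonempty (Fin n) := ⟨⟨0, by omega⟩⟩
  obtain ⟨w, hw, hkey, hγpos⟩ := exists_good_w hn A hA hirr β γ hβ hγ hs
  set wmin : ℝ := Finset.univ.inf' Finset.univ_nonempty w with hwmindef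
  have hwmin : 0 < wmin := (Finset.lt_inf'_iff _).2 fun i _ => hw i
  have hwminle : ∀ i, wmin ≤ w i := fun i => Finset.inf'_le _ (Finset.mem_univ i)
  set wmax : ℝ := Finset.univ.sup' Finset.univ_nonempty w with hwmaxdef
  have hwmaxge : ∀ i, w i ≤ wmax := fun i => Finset.le_sup' _ (Finset.mem_univ i)
  have hwmax : 0 < wmax := lt_of_lt_of_le (hw (Classical.arbitrary _)) (hwmaxge _)
  set gm : ℝ := Finset.univ.inf' Finset.univ_nonempty (fun i => γ i * w i) with hgmdef
  have hgm : 0 < gm := (Finset.lt_inf'_iff _).2 fun i _ => mul_pos (hγpos i) (hw i)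
  set c : ℝ := gm / 2 with hcdef
  have hc : 0 < c := by rw [hcdef]; linarith
  have hcw : ∀ i, c < γ i * w i := by
    intro i
    have h1 : gm ≤ γ i * w i := Finset.inf'_le _ (Finset.mem_univ i)
    rw [hcdef]; linarith
  clear_value wmin wmax gm c
  refine ⟨?_, ?_, ?_, ?_⟩
  · -- 0 is an equilibrium
    funext i
    show sisG A β γ 0 i = 0
    rw [sisG]
    simp
  · -- uniqueness of equilibrium in the box
    intro y hy hGy
    set m : ℝ := Finset.univ.sup' Finset.univ_nonempty (fun i => y i / w i) with hmdef
    obtain ⟨i0, _, hi0⟩ := Finset.exists_mem_eq_sup' Finset.univ_nonempty (fun i => y i / w i)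
    have hle : ∀ i, y i / w i ≤ m := fun i => Finset.le_sup' (fun i => y i / w i) (Finset.mem_univ i)
    rcases le_or_gt m 0 with hm | hm
    · funext i
      show y i = 0
      have h1 : y i / w i ≤ 0 := le_trans (hle i) hm
      have h2 : y i ≤ 0 := by
        rw [div_nonpos_iff] at h1
        rcases h1 with ⟨h, hw2⟩ | ⟨h, _⟩
        · linarith [hw i]
        · exact h
      exact le_antisymm h2 (hy i).1
    · exfalso
      have hyi0 : y i0 = m * w i0 := by
        have h : y i0 / w i0 = m := hi0.symm
        rw [div_eq_iff (hw i0).ne'] at h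
        exact h
      have hyi0pos : 0 < y i0 := by rw [hyi0]; exact mul_pos hm (hw i0)
      have hGi : sisG A β γ y i0 = 0 := by rw [hGy]; rfl
      rw [sisG] at hGi
      have hyj : ∀ j, y j ≤ m * w j := fun j => (div_le_iff₀ (hw j)).1 (hle j)
      set S : ℝ := ∑ j, A i0 j * y j with hSdef
      have hSle : S ≤ m * ∑ j, A i0 j * w j := by
        rw [hSdef, Finset.mul_sum]
        apply Finset.sum_le_sum
        intro j _
        calc A i0 j * y j ≤ A i0 j * (m * w j) := mul_le_mul_of_nonneg_left (hyj j) (hA i0 j)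
          _ = m * (A i0 j * w j) := by ring
      have hβS : β i0 * S ≤ m * (γ i0 * w i0) := by
        have ha : β i0 * S ≤ β i0 * (m * ∑ j, A i0 j * w j) :=
          mul_le_mul_of_nonneg_left hSle (hβ i0).le
        have hb : m * (β i0 * ∑ j, A i0 j * w j) ≤ m * (γ i0 * w i0) :=
          mul_le_mul_of_nonneg_left (hkey i0) hm.le
        nlinarith
      have h2 : (0:ℝ) ≤ 1 - y i0 := by linarith [(hy i0).2]
      have h3 : (1 - y i0) * (β i0 * S) ≤ (1 - y i0) * (m * (γ i0 * w i0)) :=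
        mul_le_mul_of_nonneg_left hβS h2
      have h4 : (1 - y i0) * (m * (γ i0 * w i0)) = (1 - y i0) * (γ i0 * y i0) := by
        rw [hyi0]; ring
      have h5 : γ i0 * y i0 ≤ (1 - y i0) * (γ i0 * y i0) := by nlinarith [hGi, h3, h4]
      nlinarith [h5, mul_pos hyi0pos (mul_pos (hγpos i0) hyi0pos)]
  · -- stability
    intro ε hε
    refine ⟨ε * wmin / (2 * wmax), by positivity, ?_⟩
    intro x hsol hx0 hnorm t ht
    have hbox := sis_invariant A β γ hA hβ hγ x hsol hx0
    set q0 : ℝ := ‖x 0‖ / wmin with hq0def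
    have hq0 : 0 ≤ q0 := by positivity
    have hq0wmin : q0 * wmin = ‖x 0‖ := div_mul_cancel₀ _ hwmin.ne'
    clear_value q0
    have h00 : ∀ i, x 0 i ≤ q0 * w i := by
      intro i
      have h1 : x 0 i ≤ ‖x 0‖ := by
        calc x 0 i ≤ |x 0 i| := le_abs_self _
          _ = ‖x 0 i‖ := (Real.norm_eq_abs _).symm
          _ ≤ ‖x 0‖ := norm_le_pi_norm (x 0) i
      calc x 0 i ≤ q0 * wmin := by rw [hq0wmin]; exact h1
        _ ≤ q0 * w i := mul_le_mul_of_nonneg_left (hwminle i) hq0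
    have hxt : ∀ i, x t i ≤ q0 * w i := by
      intro i
      have hdec : ∀ ε' : ℝ, 0 < ε' → x t i ≤ (q0 + ε') * w i := by
        intro ε' hε'
        have h1 := sis_decay A β γ hA hβ w hw hkey c hc hcw x hsol hbox q0 hq0 h00 ε' hε' t ht i
        have hden : 0 < 1 + c * (q0 + ε') * t := by
          have : 0 ≤ c * (q0 + ε') * t := by positivity
          linarith
        calc x t i ≤ (q0 + ε') / (1 + c * (q0 + ε') * t) * w i := h1
          _ ≤ (q0 + ε') * w i := by
              apply mul_le_mul_of_nonneg_right _ (hw i).le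
              rw [div_le_iff₀ hden]
              nlinarith [mul_nonneg (mul_nonneg hc.le (by linarith : (0:ℝ) ≤ q0 + ε')) ht]
      by_contra hcon
      push_neg at hcon
      have hwi := hw i
      have hthis := hdec ((x t i - q0 * w i) / (2 * w i)) (by
        apply div_pos (by linarith) (by linarith))
      have h4 : (x t i - q0 * w i) / (2 * w i) * w i = (x t i - q0 * w i) / 2 := by
        field_simp
      nlinarith [hthis, h4]
    have hnormt : ‖x t‖ ≤ q0 * wmax := by
      refine (pi_norm_le_iff_of_nonneg (by positivity)).2 fun i => ?_
      rw [Real.norm_eq_abs, abs_of_nonneg (hbox t ht i).1]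
      calc x t i ≤ q0 * w i := hxt i
        _ ≤ q0 * wmax := mul_le_mul_of_nonneg_left (hwmaxge i) hq0
    have hfin : q0 * wmax < ε := by
      have h2 : ε * wmin / (2 * wmax) * (2 * wmax) = ε * wmin := by
        field_simp
      have h3 : q0 * wmin * (2 * wmax) < ε * wmin := by
        rw [hq0wmin]
        calc ‖x 0‖ * (2 * wmax) < ε * wmin / (2 * wmax) * (2 * wmax) :=
              mul_lt_mul_of_pos_right hnorm (by positivity)
          _ = ε * wmin := h2
      have h4 : q0 * (2 * wmax) * wmin < ε * wmin := by
        rw [show q0 * (2 * wmax) * wmin = q0 * wmin * (2 * wmax) from by ring]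
        exact h3
      have h5 : q0 * (2 * wmax) < ε := lt_of_mul_lt_mul_right h4 hwmin.le
      nlinarith [mul_nonneg hq0 hwmax.le]
    linarith
  · -- convergence
    intro x hsol hx0
    have hbox := sis_invariant A β γ hA hβ hγ x hsol hx0
    set q0 : ℝ := 1 / wmin with hq0def
    have hq0 : 0 ≤ q0 := by positivity
    have hq0w : q0 * wmin = 1 := by rw [hq0def]; field_simp
    have h00 : ∀ i, x 0 i ≤ q0 * w i := by
      intro i
      have h1 : (1:ℝ) ≤ w i / wmin := (one_le_div hwmin).2 (hwminle i)
      have h2 : q0 * w i = w i / wmin := by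
        rw [hq0def, div_mul_eq_mul_div, one_mul]
      calc x 0 i ≤ 1 := (hx0 i).2
        _ ≤ q0 * w i := by rw [h2]; exact h1
    have hdecay := sis_decay A β γ hA hβ w hw hkey c hc hcw x hsol hbox q0 hq0 h00 1 one_pos
    have hb : ∀ t, 0 ≤ t → ‖x t‖ ≤ (q0 + 1) * wmax / (1 + c * (q0 + 1) * t) := by
      intro t ht
      have hden : 0 < 1 + c * (q0 + 1) * t := by
        have : 0 ≤ c * (q0 + 1) * t := by positivity
        linarith
      refine (pi_norm_le_iff_of_nonneg (by positivity)).2 fun i => ?_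
      rw [Real.norm_eq_abs, abs_of_nonneg (hbox t ht i).1]
      calc x t i ≤ (q0 + 1) / (1 + c * (q0 + 1) * t) * w i := hdecay t ht i
        _ ≤ (q0 + 1) / (1 + c * (q0 + 1) * t) * wmax :=
            mul_le_mul_of_nonneg_left (hwmaxge i) (by positivity)
        _ = (q0 + 1) * wmax / (1 + c * (q0 + 1) * t) := by ring
    have hg : Tendsto (fun t : ℝ => (q0 + 1) * wmax / (1 + c * (q0 + 1) * t)) atTop (𝓝 0) := by
      apply Tendsto.div_atTop (tendsto_const_nhds)
      apply tendsto_atTop_add_const_left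
      exact Tendsto.const_mul_atTop (by positivity) tendsto_id
    apply squeeze_zero_norm' ?_ hg
    filter_upwards [eventually_ge_atTop (0:ℝ)] with t ht
    exact hb t ht
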